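/- Let (Ω, 𝓕, P) be a probability space, 𝒢 ⊆ 𝓕 a sub-σ-algebra, M : Ω → ℝ a 𝒢-measurable random variable, and Z : Ω → ℝ a random variable independent of 𝒢 with Gaussian law of mean 0 and variance v > 0. Set Y = M + Z. Then the regular conditional distribution of Y given 𝒢 has the Gaussian density y ↦ (2πv)^{−1/2}·exp(−(M − y)²/(2v)) with respect to Lebesgue measure: for every bounded Borel function g : ℝ → ℝ, almost surely E[g(Y) | 𝒢] = ∫_ℝ g(y)·(2πv)^{−1/2}·exp(−(M − y)²/(2v)) dy. -/

import Mathlib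

open MeasureTheory ProbabilityTheory Filter
open scoped NNReal ENNReal

noncomputable section

lemma cgd_key (g : ℝ → ℝ) (v : ℝ) (hv : 0 < v) (m : ℝ) :
    ∫ z, g (m + z) ∂(gaussianReal 0 (Real.toNNReal v)) =
      ∫ y : ℝ, g y * (Real.sqrt (2 * Real.pi * v))⁻¹ *
        Real.exp (-(m - y) ^ 2 / (2 * v)) := by
  have hv0 : (Real.toNNReal v) ≠ 0 := by
    simp [Real.toNNReal_eq_zero, not_le, hv]
  have hvc : ((Real.toNNReal v : ℝ≥0) : ℝ) = v := Real.coe_toNNReal v hv.le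
  rw [gaussianReal_of_var_ne_zero _ hv0]
  have hpdf : (gaussianPDF 0 v.toNNReal) =
      fun x => ((fun x => (gaussianPDFReal 0 v.toNNReal x).toNNReal) x : ℝ≥0∞) := rfl
  rw [hpdf, integral_withDensity_eq_integral_smul
    ((measurable_gaussianPDFReal 0 v.toNNReal).real_toNNReal) (fun z => g (m + z))]
  have h1 : ∀ z : ℝ, (gaussianPDFReal 0 v.toNNReal z).toNNReal • g (m + z)
      = (fun y => g y * (Real.sqrt (2 * Real.pi * v))⁻¹ *
          Real.exp (-(m - y) ^ 2 / (2 * v))) (z + m) := by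
    intro z
    have hnn := gaussianPDFReal_nonneg 0 v.toNNReal z
    rw [NNReal.smul_def, Real.coe_toNNReal _ hnn, smul_eq_mul, add_comm m z]
    simp only [gaussianPDFReal, hvc, sub_zero]
    have h2 : -(m - (z + m)) ^ 2 = -z ^ 2 := by ring
    rw [h2]
    ring
  simp_rw [h1]
  exact integral_add_right_eq_self (fun y => g y * (Real.sqrt (2 * Real.pi * v))⁻¹ *
          Real.exp (-(m - y) ^ 2 / (2 * v))) m

/-- If `M` is `𝒢`-measurable and `Z` is independent of `𝒢` with Gaussian law
`N(0, v)`, `v > 0`, then the regular conditional distribution of `Y = M + Z` given `𝒢` has the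
Gaussian density `y ↦ (2πv)^{-1/2} exp(-(M - y)²/(2v))`: for every bounded Borel `g`,
`E[g(Y) | 𝒢] = ∫ g(y) (2πv)^{-1/2} exp(-(M - y)²/(2v)) dy` a.s. -/
theorem conditional_gaussian_density
    {Ω : Type*} [mΩ : MeasurableSpace Ω]
    (P : Measure Ω) [IsProbabilityMeasure P]
    (𝒢 : MeasurableSpace Ω) (h𝒢 : 𝒢 ≤ mΩ)
    (M Z : Ω → ℝ) (hM : Measurable[𝒢] M) (hZ : Measurable[mΩ] Z)
    (v : ℝ) (hv : 0 < v)
    (hZlaw : @Measure.map Ω ℝ mΩ _ Z P = gaussianReal 0 (Real.toNNReal v))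
    (hindep : @Indep Ω (MeasurableSpace.comap Z inferInstance) 𝒢 mΩ P)
    (g : ℝ → ℝ) (hg : Measurable g) (hgbdd : ∃ C : ℝ, ∀ x, |g x| ≤ C) :
    P[fun ω => g (M ω + Z ω)|𝒢] =ᵐ[P]
      fun ω => ∫ y : ℝ, g y * (Real.sqrt (2 * Real.pi * v))⁻¹ *
        Real.exp (-(M ω - y) ^ 2 / (2 * v)) := by
  letI : MeasurableSpace Ω := mΩ
  obtain ⟨C, hC⟩ := hgbdd
  set γ : Measure ℝ := gaussianReal 0 (Real.toNNReal v) with hγ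
  set φ : ℝ → ℝ := fun m => ∫ z, g (m + z) ∂γ with hφ
  have hMm : Measurable[mΩ] M := hM.mono h𝒢 le_rfl
  set f : Ω → ℝ := fun ω => g (M ω + Z ω) with hf
  have hfmeas : Measurable[mΩ] f := hg.comp (hMm.add hZ)
  have hfint : Integrable f P := by
    refine Integrable.mono' (integrable_const C) hfmeas.aestronglyMeasurable
      (ae_of_all _ fun ω => ?_)
    simpa [Real.norm_eq_abs] using hC (M ω + Z ω)
  -- strong measurability of φ
  have hφsm : StronglyMeasurable φ := by
    exact StronglyMeasurable.integral_prod_right'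
      (f := fun p : ℝ × ℝ => g (p.1 + p.2))
      ((hg.comp (measurable_fst.add measurable_snd)).stronglyMeasurable)
  -- bound on φ
  have hφbdd : ∀ m, |φ m| ≤ C := by
    intro m
    rw [← Real.norm_eq_abs]
    calc ‖∫ z, g (m + z) ∂γ‖ ≤ C * (γ Set.univ).toReal :=
          norm_integral_le_of_norm_le_const (ae_of_all _ fun z => by
            simpa [Real.norm_eq_abs] using hC (m + z))
      _ = C := by simp
  -- RHS equals φ ∘ M
  have hRHS : (fun ω => ∫ y : ℝ, g y * (Real.sqrt (2 * Real.pi * v))⁻¹ *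
        Real.exp (-(M ω - y) ^ 2 / (2 * v))) = fun ω => φ (M ω) :=
    funext fun ω => (cgd_key g v hv (M ω)).symm
  rw [hRHS]
  refine (ae_eq_condExp_of_forall_setIntegral_eq h𝒢 hfint ?_ ?_ ?_).symm
  · -- integrable on sets
    intro s _ _
    refine Integrable.integrableOn (Integrable.mono' (integrable_const C)
      ((hφsm.measurable.comp hMm).aestronglyMeasurable) (ae_of_all _ fun ω => ?_))
    simpa [Real.norm_eq_abs] using hφbdd (M ω)
  · -- set integral equality
    intro s hs _
    set clamp : ℝ → ℝ := fun i => max (min i 1) 0 with hclamp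
    have hclampm : Measurable clamp := (measurable_id.min measurable_const).max measurable_const
    have hclampbdd : ∀ i, |clamp i| ≤ 1 := fun i => by
      rw [abs_of_nonneg (le_max_right _ _)]
      exact max_le (min_le_right _ _) zero_le_one
    have hclamp0 : clamp 0 = 0 := by norm_num [hclamp]
    have hclamp1 : clamp 1 = 1 := by norm_num [hclamp]
    set X : Ω → ℝ × ℝ := fun ω => (M ω, s.indicator (fun _ => (1:ℝ)) ω) with hX
    have hX𝒢 : Measurable[𝒢] X := hM.prodMk (measurable_const.indicator hs)
    have hXm : Measurable[mΩ] X := hX𝒢.mono h𝒢 le_rfl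
    have hIndepXZ : IndepFun X Z P := by
      rw [IndepFun_iff_Indep, Indep_iff]
      intro t1 t2 ht1 ht2
      exact (Indep_iff _ _ _).1 hindep.symm t1 t2 (hX𝒢.comap_le t1 ht1) ht2
    have hmap : P.map (fun ω => (X ω, Z ω)) = (P.map X).prod γ := by
      rw [← hZlaw]
      exact (indepFun_iff_map_prod_eq_prod_map_map hXm.aemeasurable hZ.aemeasurable).1 hIndepXZ
    haveI : IsProbabilityMeasure (P.map X) := Measure.isProbabilityMeasure_map hXm.aemeasurable
    set F : (ℝ × ℝ) × ℝ → ℝ := fun p => clamp p.1.2 * g (p.1.1 + p.2) with hF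
    have hFmeas : Measurable F :=
      (hclampm.comp (measurable_snd.comp measurable_fst)).mul
        (hg.comp ((measurable_fst.comp measurable_fst).add measurable_snd))
    have hFbdd : ∀ p, ‖F p‖ ≤ C := by
      intro p
      rw [Real.norm_eq_abs, hF]
      calc |clamp p.1.2 * g (p.1.1 + p.2)| = |clamp p.1.2| * |g (p.1.1 + p.2)| := abs_mul _ _
        _ ≤ 1 * C := mul_le_mul (hclampbdd _) (hC _) (abs_nonneg _) zero_le_one
        _ = C := one_mul C
    have hFint : Integrable F ((P.map X).prod γ) :=
      Integrable.mono' (integrable_const C) hFmeas.aestronglyMeasurable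
        (ae_of_all _ fun p => hFbdd p)
    have hsm : MeasurableSet[mΩ] s := h𝒢 s hs
    calc ∫ ω in s, φ (M ω) ∂P
        = ∫ ω, s.indicator (fun ω => φ (M ω)) ω ∂P := (integral_indicator hsm).symm
      _ = ∫ ω, clamp ((X ω).2) * φ ((X ω).1) ∂P := by
          refine integral_congr_ae (ae_of_all _ fun ω => ?_)
          by_cases hω : ω ∈ s <;>
            simp [hω, hX, hclamp0, hclamp1, Set.indicator_of_mem, Set.indicator_of_notMem]
      _ = ∫ x, clamp x.2 * φ x.1 ∂(P.map X) :=
          (integral_map hXm.aemeasurable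
            ((hclampm.comp measurable_snd).mul
              (hφsm.measurable.comp measurable_fst)).aestronglyMeasurable).symm
      _ = ∫ x, ∫ z, F (x, z) ∂γ ∂(P.map X) := by
          refine integral_congr_ae (ae_of_all _ fun x => ?_)
          rw [hφ]
          exact (integral_const_mul _ _).symm
      _ = ∫ p, F p ∂((P.map X).prod γ) := (integral_prod F hFint).symm
      _ = ∫ p, F p ∂(P.map (fun ω => (X ω, Z ω))) := by rw [hmap]
      _ = ∫ ω, F (X ω, Z ω) ∂P :=
          integral_map (hXm.aemeasurable.prodMk hZ.aemeasurable)
            hFmeas.aestronglyMeasurable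
      _ = ∫ ω, s.indicator f ω ∂P := by
          refine integral_congr_ae (ae_of_all _ fun ω => ?_)
          by_cases hω : ω ∈ s <;>
            simp [hω, hF, hX, hf, hclamp0, hclamp1, Set.indicator_of_mem,
              Set.indicator_of_notMem]
      _ = ∫ ω in s, f ω ∂P := integral_indicator hsm
  · exact (hφsm.measurable.comp hM).stronglyMeasurable.aestronglyMeasurable

end
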